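/- In the power of a path P_n^k with k + 2 ≤ n ≤ 2k, the vertex set {v_0, v_k, v_{k+1}} is a biclique (a maximal induced complete bipartite subgraph with an edge), and for any two indices i, j with n - 1 - k ≤ i < j ≤ k, the pair {v_i, v_j} is also a biclique. -/

import Mathlib

open SimpleGraph

/-- The `k`-th power of a path on `n` vertices: `v_i ~ v_j` iff `0 < |i - j| ≤ k`. -/
def pathPower (n k : ℕ) : SimpleGraph (Fin n) :=
  SimpleGraph.fromRel (fun i j => i.val ≤ j.val ∧ j.val ≤ i.val + k)

/-- The cyclic distance between two vertices of `ZMod n`. -/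
def cdist (n : ℕ) (i j : ZMod n) : ℕ := min (i - j).val (j - i).val

/-- The `k`-th power of a cycle on `n` vertices: `v_i ~ v_j` iff the
cyclic distance between `i` and `j` is between `1` and `k`. -/
def cyclePower (n k : ℕ) : SimpleGraph (ZMod n) :=
  SimpleGraph.fromRel (fun i j => cdist n i j ≤ k)

/-- `S` induces a complete bipartite subgraph of `G`. -/
def IsCompleteBipartiteSet {V : Type*} (G : SimpleGraph V) (S : Set V) : Prop :=
  ∃ A B : Set V, A ∪ B = S ∧ Disjoint A B ∧
    (∀ a ∈ A, ∀ b ∈ B, G.Adj a b) ∧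
    (∀ a ∈ A, ∀ a' ∈ A, ¬ G.Adj a a') ∧
    (∀ b ∈ B, ∀ b' ∈ B, ¬ G.Adj b b')

/-- A biclique: a maximal set of vertices inducing a complete bipartite
subgraph with at least one edge. -/
def IsBiclique {V : Type*} (G : SimpleGraph V) (S : Set V) : Prop :=
  IsCompleteBipartiteSet G S ∧ (∃ u ∈ S, ∃ v ∈ S, G.Adj u v) ∧
  ∀ T : Set V, S ⊆ T → IsCompleteBipartiteSet G T → T = S

/-- A set is monochromatic under a colouring. -/
def Monochromatic {V α : Type*} (c : V → α) (S : Set V) : Prop :=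
  ∃ a, ∀ v ∈ S, c v = a

/-- `G` admits a biclique-colouring with `m` colours. -/
def BicliqueColorable {V : Type*} (G : SimpleGraph V) (m : ℕ) : Prop :=
  ∃ c : V → Fin m, ∀ S : Set V, IsBiclique G S → ¬ Monochromatic c S

/-- The biclique-chromatic number. -/
noncomputable def bicliqueChromaticNumber {V : Type*} (G : SimpleGraph V) : ℕ :=
  sInf {m | BicliqueColorable G m}

/-- `a`, `b`, `c` induce a path on three vertices (with middle vertex `b`). -/
def IsInducedP3 {V : Type*} (G : SimpleGraph V) (a b c : V) : Prop :=
  a ≠ b ∧ b ≠ c ∧ a ≠ c ∧ G.Adj a b ∧ G.Adj b c ∧ ¬ G.Adj a c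

/-- `a`, `b`, `c`, `d` induce a four-cycle (in this cyclic order). -/
def IsInducedC4 {V : Type*} (G : SimpleGraph V) (a b c d : V) : Prop :=
  a ≠ b ∧ a ≠ c ∧ a ≠ d ∧ b ≠ c ∧ b ≠ d ∧ c ≠ d ∧
  G.Adj a b ∧ G.Adj b c ∧ G.Adj c d ∧ G.Adj d a ∧ ¬ G.Adj a c ∧ ¬ G.Adj b d


lemma adj_pathPower {n k : ℕ} (x y : Fin n) :
    (pathPower n k).Adj x y ↔ x.val ≠ y.val ∧ x.val ≤ y.val + k ∧ y.val ≤ x.val + k := by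
  simp only [pathPower, SimpleGraph.fromRel_adj, ne_eq, Fin.ext_iff]
  omega

lemma key_lemma (n k : ℕ) (h1 : k + 2 ≤ n) (h2 : n ≤ 2 * k) (A B : Set (Fin n))
    (hadj : ∀ a ∈ A, ∀ b ∈ B, (pathPower n k).Adj a b)
    (hA : ∀ a ∈ A, ∀ a' ∈ A, ¬ (pathPower n k).Adj a a')
    (hB : ∀ b ∈ B, ∀ b' ∈ B, ¬ (pathPower n k).Adj b b')
    (h0 : (⟨0, by linarith⟩ : Fin n) ∈ A)
    (hk : (⟨k, by linarith⟩ : Fin n) ∈ A ∪ B)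
    (hk1 : (⟨k + 1, by linarith⟩ : Fin n) ∈ A ∪ B)
    (w : Fin n) (hw : w ∈ A ∪ B) :
    w.val = 0 ∨ w.val = k ∨ w.val = k + 1 := by
  have hvk : (⟨k, by linarith⟩ : Fin n) ∈ B := by
    rcases hk with h | h
    · exfalso
      exact hA _ h0 _ h ((adj_pathPower _ _).2 (by simp; omega))
    · exact h
  have hvk1 : (⟨k + 1, by linarith⟩ : Fin n) ∈ A := by
    rcases hk1 with h | h
    · exact h
    · exfalso
      exact hB _ hvk _ h ((adj_pathPower _ _).2 (by simp; omega))
  have hwlt := w.isLt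
  rcases hw with hw | hw
  · have h0' := hA _ hw _ h0
    have h1' := hA _ hw _ hvk1
    rw [adj_pathPower] at h0' h1'
    simp only [ne_eq] at h0' h1'
    omega
  · have h' := hB _ hw _ hvk
    rw [adj_pathPower] at h'
    simp only [ne_eq] at h'
    omega

/-- In `P_n^k` with `k + 2 ≤ n ≤ 2k`, the set `{v_0, v_k, v_{k+1}}` is a
biclique, and every pair `{v_i, v_j}` with `n - 1 - k ≤ i < j ≤ k` is a biclique. -/
theorem stmt_2 (n k : ℕ) (h1 : k + 2 ≤ n) (h2 : n ≤ 2 * k) :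
    IsBiclique (pathPower n k)
      {(⟨0, by omega⟩ : Fin n), ⟨k, by omega⟩, ⟨k + 1, by omega⟩} ∧
    (∀ i j : Fin n, n - 1 - k ≤ i.val → i.val < j.val → j.val ≤ k →
      IsBiclique (pathPower n k) {i, j}) := by
  have adj01 : (pathPower n k).Adj ⟨0, by omega⟩ ⟨k, by omega⟩ :=
    (adj_pathPower _ _).2 (by simp; omega)
  have adj12 : (pathPower n k).Adj ⟨k, by omega⟩ ⟨k + 1, by omega⟩ :=
    (adj_pathPower _ _).2 (by simp; omega)
  constructor
  · refine ⟨⟨{(⟨k, by omega⟩ : Fin n)}, {(⟨0, by omega⟩ : Fin n), ⟨k + 1, by omega⟩},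
      ?_, ?_, ?_, ?_, ?_⟩, ?_, ?_⟩
    · ext x
      simp only [Set.mem_union, Set.mem_insert_iff, Set.mem_singleton_iff]
      tauto
    · simp only [Set.disjoint_singleton_left, Set.mem_insert_iff, Set.mem_singleton_iff,
        Fin.ext_iff]
      omega
    · intro a ha b hb
      simp only [Set.mem_singleton_iff] at ha
      simp only [Set.mem_insert_iff, Set.mem_singleton_iff] at hb
      subst ha
      rcases hb with rfl | rfl
      · exact adj01.symm
      · exact adj12
    · intro a ha a' ha'
      simp only [Set.mem_singleton_iff] at ha ha'
      subst ha; subst ha'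
      exact (pathPower n k).loopless.irrefl _
    · intro b hb b' hb'
      simp only [Set.mem_insert_iff, Set.mem_singleton_iff] at hb hb'
      rw [adj_pathPower]
      rcases hb with rfl | rfl <;> rcases hb' with rfl | rfl <;> simp <;> omega
    · exact ⟨_, Set.mem_insert _ _, _, Set.mem_insert_of_mem _ (Set.mem_insert _ _), adj01⟩
    · rintro T hST ⟨A, B, hAB, hdisj, hadj, hA, hB⟩
      refine Set.Subset.antisymm ?_ hST
      intro w hw
      have h0T : (⟨0, by omega⟩ : Fin n) ∈ A ∪ B := by
        rw [hAB]; exact hST (Set.mem_insert _ _)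
      have hkT : (⟨k, by omega⟩ : Fin n) ∈ A ∪ B := by
        rw [hAB]; exact hST (Set.mem_insert_of_mem _ (Set.mem_insert _ _))
      have hk1T : (⟨k + 1, by omega⟩ : Fin n) ∈ A ∪ B := by
        rw [hAB]
        exact hST (Set.mem_insert_of_mem _ (Set.mem_insert_of_mem _ rfl))
      have hwAB : w ∈ A ∪ B := by rw [hAB]; exact hw
      have hval : w.val = 0 ∨ w.val = k ∨ w.val = k + 1 := by
        rcases h0T with h0 | h0
        · exact key_lemma n k h1 h2 A B hadj hA hB h0 hkT hk1T w hwAB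
        · exact key_lemma n k h1 h2 B A (fun a ha b hb => (hadj b hb a ha).symm) hB hA h0
            hkT.symm hk1T.symm w hwAB.symm
      simp only [Set.mem_insert_iff, Set.mem_singleton_iff, Fin.ext_iff]
      exact hval
  · intro i j hi hij hj
    have hun : ∀ w : Fin n, ¬ (pathPower n k).Adj w i → w = i := by
      intro w hw
      rw [adj_pathPower] at hw
      have := w.isLt
      have := i.isLt
      ext
      omega
    have hun' : ∀ w : Fin n, ¬ (pathPower n k).Adj w j → w = j := by
      intro w hw
      rw [adj_pathPower] at hw
      have := w.isLt
      have := j.isLt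
      ext
      omega
    have adjij : (pathPower n k).Adj i j := (adj_pathPower _ _).2 (by omega)
    refine ⟨⟨{i}, {j}, ?_, ?_, ?_, ?_, ?_⟩, ⟨i, Set.mem_insert _ _, j, Set.mem_insert_of_mem _ rfl, adjij⟩, ?_⟩
    · rfl
    · simp only [Set.disjoint_singleton_left, Set.mem_singleton_iff]
      intro h; subst h; omega
    · rintro a rfl b rfl
      exact adjij
    · rintro a rfl a' rfl
      exact (pathPower n k).loopless.irrefl _
    · rintro b rfl b' rfl
      exact (pathPower n k).loopless.irrefl _
    · rintro T hST ⟨A, B, hAB, hdisj, hadj, hA, hB⟩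
      refine Set.Subset.antisymm ?_ hST
      intro w hw
      have hiT : i ∈ A ∪ B := by rw [hAB]; exact hST (Set.mem_insert _ _)
      have hjT : j ∈ A ∪ B := by rw [hAB]; exact hST (Set.mem_insert_of_mem _ rfl)
      have hwAB : w ∈ A ∪ B := by rw [hAB]; exact hw
      simp only [Set.mem_insert_iff, Set.mem_singleton_iff]
      rcases hiT with hiA | hiB
      · have hjB : j ∈ B := by
          rcases hjT with h | h
          · exact absurd adjij (hA _ hiA _ h)
          · exact h
        rcases hwAB with h | h
        · exact Or.inl (hun w (hA _ h _ hiA))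
        · exact Or.inr (hun' w (hB _ h _ hjB))
      · have hjA : j ∈ A := by
          rcases hjT with h | h
          · exact h
          · exact absurd adjij (hB _ hiB _ h)
        rcases hwAB with h | h
        · exact Or.inr (hun' w (hA _ h _ hjA))
        · exact Or.inl (hun w (hB _ h _ hiB))
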